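/- arXiv:2308.08374 — 5 statements merged into one kernel-verified Lean document; each statement's English description precedes it below -/
import Mathlib

section
/- Let w be a word over Σ with alph(w) = Σ and let γ(w) be its first-occurrence order word. Then for every c ∈ ℕ, the word γ(w)^c · w satisfies: γ(γ(w)^c · w) = γ(w), and for every letter a ∈ Σ, ι_a(γ(w)^c · w) = ι_a(w) + c and R_a(γ(w)^c · w) = R_a(w). (This is the 'only if' direction of the pumping lemma for subsequence universality signatures.) -/
open List

section Defs

variable {α : Type*}

/-- A word `w` is `k`-universal if every word of length at most `k` is a subsequence of `w`. -/
def IsKUniversal [Fintype α] (k : ℕ) (w : List α) : Prop :=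
  ∀ u : List α, u.length ≤ k → u.Sublist w

/-- The universality index `ι(w)`: the largest `k` such that `w` is `k`-universal. -/
noncomputable def univIndex [Fintype α] (w : List α) : ℕ :=
  sSup {k | IsKUniversal k w}

/-- `c`-fold concatenation (power) of a word. -/
def wpow (u : List α) (c : ℕ) : List α := (List.replicate c u).flatten

/-- Auxiliary (fuelled) computation of the arch factorization: returns the list of
arches and the rest. Each arch is the shortest prefix of the remaining suffix
containing every letter of the alphabet. -/
noncomputable def archFactAux [Fintype α] [DecidableEq α] :
    ℕ → List α → List (List α) × List α
  | 0, w => ([], w)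
  | fuel + 1, w =>
    if Finset.univ ⊆ w.toFinset then
      let n := sInf {n | Finset.univ ⊆ (w.take n).toFinset}
      let p := archFactAux fuel (w.drop n)
      (w.take n :: p.1, p.2)
    else ([], w)

/-- The arch factorization of `w`: the list of arches together with the rest. -/
noncomputable def archFact [Fintype α] [DecidableEq α] (w : List α) :
    List (List α) × List α :=
  archFactAux w.length w

/-- `γ(w)`: the distinct letters of `w` in order of their first occurrence. -/
def gammaWord [DecidableEq α] (w : List α) : List α := w.reverse.dedup.reverse

/-- The suffix of `w` strictly after the first occurrence of the letter `a`. -/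
def afterFirst [DecidableEq α] (a : α) (w : List α) : List α :=
  w.drop (w.idxOf a + 1)

/-- `ι_a(w)`: the universality index of the suffix of `w` after the first occurrence of `a`. -/
noncomputable def iotaLetter [Fintype α] [DecidableEq α] (a : α) (w : List α) : ℕ :=
  univIndex (afterFirst a w)

/-- `R_a(w)`: the alphabet of the rest of the arch factorization of the suffix of `w`
after the first occurrence of `a`. -/
noncomputable def restLetter [Fintype α] [DecidableEq α] (a : α) (w : List α) : Finset α :=
  ((archFact (afterFirst a w)).2).toFinset

/-- `Subseq_k(w)`: the set of subsequences of `w` of length at most `k`. -/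
def subseqK (k : ℕ) (w : List α) : Set (List α) :=
  {u | u.length ≤ k ∧ u.Sublist w}

/-- Simon's congruence `u ∼_k v`. -/
def SimonCongr (k : ℕ) (u v : List α) : Prop := subseqK k u = subseqK k v

/-- Applying a substitution `h` to a pattern: replace each variable occurrence by its
image and leave terminal letters unchanged. -/
def applySub {X : Type*} (h : X → List α) (p : List (α ⊕ X)) : List α :=
  p.flatMap (Sum.elim (fun a => [a]) h)

/-- A permutation word of the alphabet: every letter occurs exactly once. -/
def IsPermWord [DecidableEq α] (γ : List α) : Prop :=
  ∀ a : α, γ.count a = 1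

end Defs


section Helpers

variable {α : Type*}

lemma dedup_append_right' [DecidableEq α] (l₁ l₂ : List α) (h : ∀ x ∈ l₁, x ∈ l₂) :
    (l₁ ++ l₂).dedup = l₂.dedup := by
  induction l₁ with
  | nil => simp
  | cons a l ih =>
    rw [cons_append, dedup_cons_of_mem (mem_append_right _ (h a (mem_cons_self)))]
    exact ih (fun x hx => h x (mem_cons_of_mem _ hx))

lemma mem_gammaWord [DecidableEq α] {a : α} {v : List α} : a ∈ gammaWord v ↔ a ∈ v := by
  simp [gammaWord]

lemma gammaWord_nodup [DecidableEq α] (v : List α) : (gammaWord v).Nodup := by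
  simp [gammaWord, List.nodup_reverse]
  exact List.nodup_dedup _

lemma gammaWord_append_self [DecidableEq α] (v : List α) :
    gammaWord (gammaWord v ++ v) = gammaWord v := by
  unfold gammaWord
  rw [reverse_append, reverse_reverse,
    dedup_append_right' _ _ (fun x hx => List.mem_dedup.2 hx), List.dedup_idem]

lemma mem_take_indexOf_succ [DecidableEq α] {a : α} {l : List α} (h : a ∈ l) :
    a ∈ l.take (l.idxOf a + 1) := by
  induction l with
  | nil => simp at h
  | cons b l ih =>
    by_cases hab : a = b
    · subst hab; rw [idxOf_cons_self]; simp
    · rw [idxOf_cons_ne _ (fun h' => hab h'.symm), Nat.succ_eq_add_one, take_succ_cons]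
      exact mem_cons_of_mem _ (ih (List.mem_of_ne_of_mem hab h))

lemma not_mem_take_indexOf [DecidableEq α] (a : α) (l : List α) :
    a ∉ l.take (l.idxOf a) := by
  induction l with
  | nil => simp
  | cons b l ih =>
    by_cases hab : a = b
    · subst hab; rw [idxOf_cons_self]; simp
    · rw [idxOf_cons_ne _ (fun h' => hab h'.symm), Nat.succ_eq_add_one, take_succ_cons]
      intro hc
      rcases mem_cons.1 hc with h | h
      · exact hab h
      · exact ih h

lemma not_mem_drop_indexOf_succ [DecidableEq α] {a : α} {l : List α}
    (hnd : l.Nodup) (h : a ∈ l) : a ∉ l.drop (l.idxOf a + 1) := by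
  have h1 : a ∈ l.take (l.idxOf a + 1) := mem_take_indexOf_succ h
  have h2 : (l.take (l.idxOf a + 1)).Disjoint (l.drop (l.idxOf a + 1)) :=
    disjoint_of_nodup_append (by rw [take_append_drop]; exact hnd)
  exact fun hc => h2 h1 hc

lemma mem_take_indexOf_filter [DecidableEq α] {p : α → Bool} {a b : α} (hpa : p a = true) :
    ∀ (l : List α), b ∈ (l.filter p).take ((l.filter p).idxOf a + 1) →
      b ∈ l.take (l.idxOf a + 1)
  | [] => by simp
  | y :: l => by
    by_cases hpy : p y = true
    · rw [filter_cons_of_pos hpy]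
      by_cases hay : a = y
      · subst hay
        rw [idxOf_cons_self, idxOf_cons_self]
        simp
      · rw [idxOf_cons_ne _ (fun h => hay h.symm), idxOf_cons_ne _ (fun h => hay h.symm),
          Nat.succ_eq_add_one, Nat.succ_eq_add_one, take_succ_cons, take_succ_cons]
        intro hb
        rcases mem_cons.1 hb with h | h
        · exact h ▸ mem_cons_self
        · exact mem_cons_of_mem _ (mem_take_indexOf_filter hpa l h)
    · rw [filter_cons_of_neg (by simpa using hpy)]
      have hay : a ≠ y := fun h => hpy (h ▸ hpa)
      rw [idxOf_cons_ne _ (fun h => hay h.symm), Nat.succ_eq_add_one, take_succ_cons]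
      intro hb
      exact mem_cons_of_mem _ (mem_take_indexOf_filter hpa l hb)

lemma dedup_append_singleton [DecidableEq α] (x : α) :
    ∀ (l : List α), (l ++ [x]).dedup = (l.dedup.filter (· ≠ x)) ++ [x]
  | [] => by simp
  | a :: l => by
    by_cases hal : a ∈ l
    · rw [cons_append, dedup_cons_of_mem (mem_append_left _ hal), dedup_append_singleton x l,
        dedup_cons_of_mem hal]
    · by_cases hax : a = x
      · rw [cons_append, dedup_cons_of_mem (by simp [hax]), dedup_append_singleton x l,
          dedup_cons_of_notMem hal, filter_cons_of_neg (by simp [hax])]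
      · rw [cons_append, dedup_cons_of_notMem (by simp [hal, hax]), dedup_append_singleton x l,
          dedup_cons_of_notMem hal, filter_cons_of_pos (by simp [hax]), cons_append]

lemma gammaWord_cons [DecidableEq α] (x : α) (v : List α) :
    gammaWord (x :: v) = x :: (gammaWord v).filter (· ≠ x) := by
  unfold gammaWord
  rw [reverse_cons, dedup_append_singleton, reverse_append, reverse_singleton,
    singleton_append, ← filter_reverse]

lemma gammaWord_take_indexOf [DecidableEq α] :
    ∀ (v : List α) (a b : α),
      b ∈ (gammaWord v).take ((gammaWord v).idxOf a + 1) →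
      b ∈ v.take (v.idxOf a + 1)
  | [], a, b => by simp [gammaWord]
  | x :: v, a, b => by
    rw [gammaWord_cons]
    by_cases hax : a = x
    · subst hax
      rw [idxOf_cons_self, idxOf_cons_self]
      simp
    · rw [idxOf_cons_ne _ (fun h => hax h.symm), idxOf_cons_ne _ (fun h => hax h.symm),
        Nat.succ_eq_add_one, Nat.succ_eq_add_one, take_succ_cons, take_succ_cons]
      intro hb
      rcases mem_cons.1 hb with hb | hb
      · exact hb ▸ mem_cons_self
      · have h1 : b ∈ (gammaWord v).take ((gammaWord v).idxOf a + 1) :=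
          mem_take_indexOf_filter (by simp [hax]) (gammaWord v) hb
        exact mem_cons_of_mem _ (gammaWord_take_indexOf v a b h1)

lemma sublist_afterFirst [DecidableEq α] {a : α} {u : List α} :
    ∀ {v : List α}, (a :: u) <+ v → u <+ afterFirst a v
  | [], h => by simp at h
  | x :: v, h => by
    by_cases hax : a = x
    · subst hax
      have h2 : u <+ v := List.cons_sublist_cons.1 h
      simpa [afterFirst, idxOf_cons_self] using h2
    · have h' : a :: u <+ v := by
        cases h with
        | cons _ h => exact h
        | cons_cons _ h => exact absurd rfl hax
      have := sublist_afterFirst h'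
      simpa [afterFirst, idxOf_cons_ne _ (fun h'' => hax h''.symm), Nat.succ_eq_add_one] using this

lemma isKUniversal_zero [Fintype α] (w : List α) : IsKUniversal 0 w := by
  intro u hu
  rw [Nat.le_zero, length_eq_zero_iff] at hu
  subst hu
  exact nil_sublist _

lemma isKUniversal_le_length [Fintype α] [Nonempty α] {k : ℕ} {w : List α}
    (h : IsKUniversal k w) : k ≤ w.length := by
  have x : α := Classical.arbitrary α
  have := (h (replicate k x) (by simp)).length_le
  simpa using this

lemma univIndex_succ_of [Fintype α] [Nonempty α] {x y : List α}
    (h1 : ∀ k, IsKUniversal k y → IsKUniversal (k + 1) x)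
    (h2 : ∀ k, IsKUniversal (k + 1) x → IsKUniversal k y) :
    univIndex x = univIndex y + 1 := by
  have bddx : BddAbove {k | IsKUniversal k x} :=
    ⟨x.length, fun k hk => isKUniversal_le_length hk⟩
  have bddy : BddAbove {k | IsKUniversal k y} :=
    ⟨y.length, fun k hk => isKUniversal_le_length hk⟩
  have hNy : univIndex y ∈ {k | IsKUniversal k y} :=
    Nat.sSup_mem ⟨0, isKUniversal_zero y⟩ bddy
  have h1' : univIndex y + 1 ∈ {k | IsKUniversal k x} := h1 _ hNy
  have hle : univIndex y + 1 ≤ univIndex x := le_csSup bddx h1'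
  have hNx : univIndex x ∈ {k | IsKUniversal k x} := Nat.sSup_mem ⟨_, h1'⟩ bddx
  obtain ⟨m, hm⟩ : ∃ m, univIndex x = m + 1 := ⟨univIndex x - 1, by omega⟩
  have hmy : IsKUniversal m y := h2 m (hm ▸ hNx)
  have : m ≤ univIndex y := le_csSup bddy hmy
  omega

lemma archFactAux_nil [Fintype α] [DecidableEq α] [Nonempty α] (f : ℕ) :
    archFactAux f ([] : List α) = ([], []) := by
  cases f with
  | zero => rw [archFactAux]
  | succ f =>
    rw [archFactAux, if_neg]
    intro h
    obtain ⟨a⟩ := ‹Nonempty α›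
    have := h (Finset.mem_univ a)
    simp at this

lemma archFactAux_fuel [Fintype α] [DecidableEq α] [Nonempty α] :
    ∀ (f₁ : ℕ) (w : List α) (f₂ : ℕ), w.length ≤ f₁ → w.length ≤ f₂ →
      archFactAux f₁ w = archFactAux f₂ w := by
  intro f₁
  induction f₁ with
  | zero =>
    intro w f₂ h1 _
    rw [Nat.le_zero, length_eq_zero_iff] at h1
    subst h1
    rw [archFactAux_nil, archFactAux_nil]
  | succ f₁ ih =>
    intro w f₂ h1 h2
    cases f₂ with
    | zero =>
      rw [Nat.le_zero, length_eq_zero_iff] at h2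
      subst h2
      rw [archFactAux_nil, archFactAux_nil]
    | succ f₂ =>
      rw [archFactAux, archFactAux]
      by_cases hc : Finset.univ ⊆ w.toFinset
      · rw [if_pos hc, if_pos hc]
        have hS : w.length ∈ {n | Finset.univ ⊆ (w.take n).toFinset} := by
          simpa [take_length] using hc
        have hmem : sInf {n | Finset.univ ⊆ (w.take n).toFinset} ∈
            {n | Finset.univ ⊆ (w.take n).toFinset} := Nat.sInf_mem ⟨_, hS⟩
        set n := sInf {n | Finset.univ ⊆ (w.take n).toFinset} with hn
        have hn1 : 1 ≤ n := by
          rcases Nat.eq_zero_or_pos n with h0 | h0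
          · exfalso
            rw [h0] at hmem
            obtain ⟨a⟩ := ‹Nonempty α›
            have := hmem (Finset.mem_univ a)
            simp at this
          · exact h0
        have hl1 : (w.drop n).length ≤ f₁ := by
          rw [length_drop]; omega
        have hl2 : (w.drop n).length ≤ f₂ := by
          rw [length_drop]; omega
        simp only []
        rw [ih (w.drop n) f₂ hl1 hl2]
      · rw [if_neg hc, if_neg hc]

lemma step_lemma [Fintype α] [DecidableEq α] [Nonempty α]
    (v : List α) (hv : v.toFinset = Finset.univ) (a : α) :
    univIndex (afterFirst a (gammaWord v ++ v)) = univIndex (afterFirst a v) + 1 ∧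
    (archFact (afterFirst a (gammaWord v ++ v))).2 = (archFact (afterFirst a v)).2 := by
  classical
  set γ := gammaWord v with hγ
  have hav : a ∈ v := by rw [← mem_toFinset, hv]; exact Finset.mem_univ a
  have haγ : a ∈ γ := mem_gammaWord.2 hav
  set j := γ.idxOf a with hj
  set i := v.idxOf a with hi'
  set s := γ.drop (j + 1) with hs
  have hjlt : j < γ.length := idxOf_lt_length_iff.2 haγ
  have hAF : afterFirst a (γ ++ v) = s ++ v := by
    rw [afterFirst, idxOf_append_of_mem haγ, drop_append_of_le_length (by omega)]
  have hnd : γ.Nodup := gammaWord_nodup v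
  have has : a ∉ s := not_mem_drop_indexOf_succ hnd haγ
  have hcov : ∀ b : α, b ∈ s ++ v.take (i + 1) := by
    intro b
    have hbv : b ∈ v := by rw [← mem_toFinset, hv]; exact Finset.mem_univ b
    have hbγ : b ∈ γ := mem_gammaWord.2 hbv
    rw [← take_append_drop (j + 1) γ] at hbγ
    rcases mem_append.1 hbγ with h | h
    · exact mem_append_right _ (gammaWord_take_indexOf v a b h)
    · exact mem_append_left _ h
  have hA : ∀ k, IsKUniversal k (afterFirst a v) → IsKUniversal (k + 1) (s ++ v) := by
    intro k hk u hu
    cases u with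
    | nil => exact nil_sublist _
    | cons b u' =>
      have h1 : [b] <+ s ++ v.take (i + 1) := singleton_sublist.2 (hcov b)
      have h2 : u' <+ v.drop (i + 1) := hk u' (by simpa using hu)
      have h3 := h1.append h2
      rw [append_assoc, take_append_drop] at h3
      simpa using h3
  have hB : ∀ k, IsKUniversal (k + 1) (s ++ v) → IsKUniversal k (afterFirst a v) := by
    intro k hk u hu
    have h1 : a :: u <+ s ++ v := hk _ (by simpa using Nat.succ_le_succ hu)
    obtain ⟨l₁, l₂, heq, hl₁, hl₂⟩ := sublist_append_iff.1 h1
    cases l₁ with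
    | nil =>
      simp only [nil_append] at heq
      exact sublist_afterFirst (heq ▸ hl₂)
    | cons c l₁ =>
      have hca : c = a := by
        have := heq
        simp only [cons_append, List.cons.injEq] at this
        exact this.1.symm
      exact absurd (hl₁.subset (mem_cons_self)) (hca ▸ has)
  constructor
  · rw [hAF]
    exact univIndex_succ_of hA hB
  · rw [hAF]
    have hilt : i < v.length := idxOf_lt_length_iff.2 hav
    have hcov' : Finset.univ ⊆ ((s ++ v).take (s.length + (i + 1))).toFinset := by
      rw [take_length_add_append]
      intro b _
      rw [mem_toFinset]
      exact hcov b
    have hmin : ∀ m ∈ {n | Finset.univ ⊆ ((s ++ v).take n).toFinset},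
        s.length + (i + 1) ≤ m := by
      intro m hm
      by_contra hlt
      push_neg at hlt
      have haa : a ∈ (s ++ v).take m := by
        have := hm (Finset.mem_univ a)
        rwa [mem_toFinset] at this
      have hmM : m ≤ s.length + i := by omega
      have hMem : a ∈ (s ++ v).take (s.length + i) := by
        have heq : (s ++ v).take m = ((s ++ v).take (s.length + i)).take m := by
          rw [take_take, min_eq_left hmM]
        exact (take_sublist m _).subset (heq ▸ haa)
      rw [take_length_add_append] at hMem
      rcases mem_append.1 hMem with h | h
      · exact has h
      · exact not_mem_take_indexOf a v h
    have hsInf : sInf {n | Finset.univ ⊆ ((s ++ v).take n).toFinset} = s.length + (i + 1) :=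
      le_antisymm (Nat.sInf_le hcov') (le_csInf ⟨_, hcov'⟩ hmin)
    have hvne : 0 < v.length := length_pos_iff.2 (ne_nil_of_mem hav)
    obtain ⟨L, hL⟩ : ∃ L, (s ++ v).length = L + 1 :=
      ⟨(s ++ v).length - 1, by rw [length_append]; omega⟩
    have hccond : Finset.univ ⊆ (s ++ v).toFinset := by
      intro b _
      rw [mem_toFinset]
      have hbv : b ∈ v := by rw [← mem_toFinset, hv]; exact Finset.mem_univ b
      exact mem_append_right _ hbv
    rw [archFact, archFact, hL, archFactAux, if_pos hccond]
    simp only [hsInf]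
    have hdrop : (s ++ v).drop (s.length + (i + 1)) = afterFirst a v := by
      rw [drop_length_add_append]; rfl
    rw [hdrop]
    have hlen : (afterFirst a v).length ≤ L := by
      have : (afterFirst a v).length = v.length - (i + 1) := by
        rw [afterFirst, length_drop]
      rw [length_append] at hL
      omega
    rw [archFactAux_fuel L (afterFirst a v) (afterFirst a v).length hlen le_rfl]

end Helpers

/-- 'only if' direction of the pumping lemma for subsequence
universality signatures. -/
theorem stmt0 {α : Type*} [Fintype α] [DecidableEq α] [Nonempty α]
    (w : List α) (hw : w.toFinset = Finset.univ) (c : ℕ) :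
    gammaWord (wpow (gammaWord w) c ++ w) = gammaWord w ∧
    (∀ a : α, iotaLetter a (wpow (gammaWord w) c ++ w) = iotaLetter a w + c) ∧
    (∀ a : α, restLetter a (wpow (gammaWord w) c ++ w) = restLetter a w) := by
  classical
  induction c with
  | zero =>
    refine ⟨?_, fun a => ?_, fun a => ?_⟩ <;> simp [wpow]
  | succ c ih =>
    obtain ⟨ihγ, ihι, ihR⟩ := ih
    have hrw : wpow (gammaWord w) (c + 1) ++ w
        = gammaWord w ++ (wpow (gammaWord w) c ++ w) := by
      simp [wpow, replicate_succ]
    set v := wpow (gammaWord w) c ++ w with hvdef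
    have hv : v.toFinset = Finset.univ := by
      rw [hvdef, toFinset_append, hw]
      exact Finset.union_eq_right.2 (Finset.subset_univ _)
    have hγv : gammaWord v = gammaWord w := ihγ
    refine ⟨?_, fun a => ?_, fun a => ?_⟩
    · rw [hrw, ← hγv, gammaWord_append_self, hγv]
    · have hst := (step_lemma v hv a).1
      rw [hγv] at hst
      rw [iotaLetter, iotaLetter, hrw, hst]
      have := ihι a
      rw [iotaLetter, iotaLetter] at this
      omega
    · have hst := (step_lemma v hv a).2
      rw [hγv] at hst
      rw [restLetter, restLetter, hrw, hst]
      have := ihR a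
      rw [restLetter, restLetter] at this
      rw [this]
end

section
/- For every word w over Σ with alph(w) = Σ, there exist a word w' over Σ and a constant c ∈ ℕ such that ι(w') ≤ (2^σ)^σ, γ(w') = γ(w), and for every letter a ∈ Σ, ι_a(w) = ι_a(w') + c and R_a(w') = R_a(w). (This is the 'if' direction of the pumping lemma: any word can be pumped down to one of universality index at most (2^σ)^σ with the same signature permutation and rest-alphabets, and all signature universality indices lowered by a common constant.) -/
open List

set_option linter.unusedSectionVars false

section Arch

variable {α : Type*} [Fintype α] [DecidableEq α] [Nonempty α]

open Finset in
lemma archFactAux_of_not_full (fuel : ℕ) (w : List α)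
    (h : ¬ Finset.univ ⊆ w.toFinset) : archFactAux fuel w = ([], w) := by
  cases fuel with
  | zero => rfl
  | succ f => simp [archFactAux, h]

/-- the canonical first-arch length -/
noncomputable def archLen (w : List α) : ℕ := sInf {n | Finset.univ ⊆ (w.take n).toFinset}

lemma archLen_mem (w : List α) (h : Finset.univ ⊆ w.toFinset) :
    Finset.univ ⊆ (w.take (archLen w)).toFinset := by
  have : w.length ∈ {n | Finset.univ ⊆ (w.take n).toFinset} := by
    simpa using h
  exact Nat.sInf_mem ⟨_, this⟩

lemma archLen_le_length (w : List α) (h : Finset.univ ⊆ w.toFinset) :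
    archLen w ≤ w.length := by
  apply Nat.sInf_le
  simpa using h

lemma archLen_min (w : List α) {k : ℕ} (hk : k < archLen w) :
    ¬ Finset.univ ⊆ (w.take k).toFinset := fun hc => Nat.notMem_of_lt_sInf hk hc

lemma archLen_pos (w : List α) (h : Finset.univ ⊆ w.toFinset) : 1 ≤ archLen w := by
  rcases Nat.eq_zero_or_pos (archLen w) with h0 | h1
  · exfalso
    have := archLen_mem w h
    rw [h0] at this
    simp only [List.take_zero, List.toFinset_nil, Finset.subset_empty] at this
    obtain ⟨a⟩ := ‹Nonempty α›
    have := Finset.mem_univ a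
    rw [‹Finset.univ = ∅›] at this
    simp at this
  · exact h1

lemma archFactAux_succ (fuel : ℕ) (w : List α) (h : Finset.univ ⊆ w.toFinset) :
    archFactAux (fuel + 1) w =
      (w.take (archLen w) :: (archFactAux fuel (w.drop (archLen w))).1,
        (archFactAux fuel (w.drop (archLen w))).2) := by
  simp [archFactAux, h, archLen]

lemma archFactAux_fuel_irrel : ∀ (fuel fuel' : ℕ) (w : List α),
    w.length ≤ fuel → w.length ≤ fuel' → archFactAux fuel w = archFactAux fuel' w := by
  intro fuel
  induction fuel with
  | zero =>
    intro fuel' w hw _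
    have : w = [] := List.length_eq_zero_iff.mp (Nat.le_zero.mp hw)
    subst this
    rw [archFactAux_of_not_full]
    · rw [archFactAux_of_not_full]
      intro hc
      obtain ⟨a⟩ := ‹Nonempty α›
      exact absurd (hc (Finset.mem_univ a)) (by simp)
    · intro hc
      obtain ⟨a⟩ := ‹Nonempty α›
      exact absurd (hc (Finset.mem_univ a)) (by simp)
  | succ f ih =>
    intro fuel' w hw hw'
    by_cases h : Finset.univ ⊆ w.toFinset
    · have hpos : 1 ≤ archLen w := archLen_pos w h
      have hlen : (w.drop (archLen w)).length ≤ f := by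
        rw [List.length_drop]
        omega
      have hw0 : 1 ≤ w.length := by
        rcases w with _ | ⟨x, t⟩
        · exfalso
          obtain ⟨a⟩ := ‹Nonempty α›
          exact absurd (h (Finset.mem_univ a)) (by simp)
        · simp
      obtain ⟨f', rfl⟩ : ∃ f', fuel' = f' + 1 := ⟨fuel' - 1, by omega⟩
      have hlen' : (w.drop (archLen w)).length ≤ f' := by
        rw [List.length_drop]
        omega
      rw [archFactAux_succ f w h, archFactAux_succ f' w h, ih _ _ hlen hlen]
      rw [ih _ _ hlen hlen']
    · rw [archFactAux_of_not_full _ _ h, archFactAux_of_not_full _ _ h]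

lemma archFact_of_not_full (w : List α) (h : ¬ Finset.univ ⊆ w.toFinset) :
    archFact w = ([], w) := archFactAux_of_not_full _ _ h

lemma archFact_rec (w : List α) (h : Finset.univ ⊆ w.toFinset) :
    archFact w = (w.take (archLen w) :: (archFact (w.drop (archLen w))).1,
      (archFact (w.drop (archLen w))).2) := by
  have hw0 : 1 ≤ w.length := by
    rcases w with _ | ⟨x, t⟩
    · exfalso
      obtain ⟨a⟩ := ‹Nonempty α›
      exact absurd (h (Finset.mem_univ a)) (by simp)
    · simp
  unfold archFact
  obtain ⟨L, hL⟩ : ∃ L, w.length = L + 1 := ⟨w.length - 1, by omega⟩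
  rw [hL, archFactAux_succ L w h]
  have heq : archFactAux L (w.drop (archLen w)) =
      archFactAux (w.drop (archLen w)).length (w.drop (archLen w)) := by
    apply archFactAux_fuel_irrel
    · rw [List.length_drop]; have := archLen_pos w h; omega
    · exact le_rfl
  rw [heq]

end Arch

section Arch2

variable {α : Type*} [Fintype α] [DecidableEq α] [Nonempty α]

noncomputable def nArch (w : List α) : ℕ := (archFact w).1.length
noncomputable def rst (w : List α) : List α := (archFact w).2

/-- A word is an arch if it contains all letters but no proper prefix does. -/
def IsArch (b : List α) : Prop :=
  Finset.univ ⊆ b.toFinset ∧ ∀ k < b.length, ¬ Finset.univ ⊆ (b.take k).toFinset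

lemma not_full_nil : ¬ Finset.univ ⊆ (([] : List α).toFinset) := by
  intro hc
  obtain ⟨a⟩ := ‹Nonempty α›
  exact absurd (hc (Finset.mem_univ a)) (by simp)

lemma nArch_of_not_full {w : List α} (h : ¬ Finset.univ ⊆ w.toFinset) : nArch w = 0 := by
  unfold nArch; rw [archFact_of_not_full w h]; rfl

lemma rst_of_not_full {w : List α} (h : ¬ Finset.univ ⊆ w.toFinset) : rst w = w := by
  unfold rst; rw [archFact_of_not_full w h]

lemma nArch_rec {w : List α} (h : Finset.univ ⊆ w.toFinset) :
    nArch w = 1 + nArch (w.drop (archLen w)) := by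
  unfold nArch; rw [archFact_rec w h]; simp [Nat.add_comm]

lemma rst_rec {w : List α} (h : Finset.univ ⊆ w.toFinset) :
    rst w = rst (w.drop (archLen w)) := by
  unfold rst; rw [archFact_rec w h]

lemma rst_not_full (w : List α) : ¬ Finset.univ ⊆ (rst w).toFinset := by
  have : ∀ n (w : List α), w.length ≤ n → ¬ Finset.univ ⊆ (rst w).toFinset := by
    intro n
    induction n with
    | zero =>
      intro w hw
      have : w = [] := List.length_eq_zero_iff.mp (Nat.le_zero.mp hw)
      subst this
      rw [rst_of_not_full not_full_nil]
      exact not_full_nil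
    | succ n ih =>
      intro w hw
      by_cases h : Finset.univ ⊆ w.toFinset
      · rw [rst_rec h]
        apply ih
        rw [List.length_drop]
        have := archLen_pos w h
        omega
      · rw [rst_of_not_full h]; exact h
  exact this w.length w le_rfl

lemma flatten_rst (w : List α) : (archFact w).1.flatten ++ rst w = w := by
  have : ∀ n (w : List α), w.length ≤ n → (archFact w).1.flatten ++ rst w = w := by
    intro n
    induction n with
    | zero =>
      intro w hw
      have : w = [] := List.length_eq_zero_iff.mp (Nat.le_zero.mp hw)
      subst this
      rw [rst_of_not_full not_full_nil, archFact_of_not_full _ not_full_nil]; rfl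
    | succ n ih =>
      intro w hw
      by_cases h : Finset.univ ⊆ w.toFinset
      · rw [rst_rec h]
        rw [archFact_rec w h]
        simp only [List.flatten_cons, List.append_assoc]
        have hd : (archFact (w.drop (archLen w))).1.flatten ++ rst (w.drop (archLen w)) =
            w.drop (archLen w) := by
          apply ih
          rw [List.length_drop]
          have := archLen_pos w h
          omega
        rw [hd, List.take_append_drop]
      · rw [rst_of_not_full h, archFact_of_not_full _ h]
        simp
  exact this w.length w le_rfl

lemma mem_arch_isArch (w : List α) : ∀ b ∈ (archFact w).1, IsArch b := by
  have : ∀ n (w : List α), w.length ≤ n → ∀ b ∈ (archFact w).1, IsArch b := by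
    intro n
    induction n with
    | zero =>
      intro w hw
      have : w = [] := List.length_eq_zero_iff.mp (Nat.le_zero.mp hw)
      subst this
      rw [archFact_of_not_full _ not_full_nil]
      simp
    | succ n ih =>
      intro w hw b hb
      by_cases h : Finset.univ ⊆ w.toFinset
      · rw [archFact_rec w h] at hb
        simp only [List.mem_cons] at hb
        rcases hb with rfl | hb
        · constructor
          · exact archLen_mem w h
          · intro k hk
            have hlt : k < archLen w := by
              rw [List.length_take] at hk
              omega
            rw [List.take_take, min_eq_left (le_of_lt hlt)]
            exact archLen_min w hlt
        · apply ih (w.drop (archLen w)) _ b hb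
          rw [List.length_drop]
          have := archLen_pos w h
          omega
      · rw [archFact_of_not_full _ h] at hb
        simp at hb
  exact this w.length w le_rfl

lemma IsArch.full {b : List α} (h : IsArch b) : Finset.univ ⊆ b.toFinset := h.1

lemma IsArch.ne_nil {b : List α} (h : IsArch b) : b ≠ [] := by
  intro hc; subst hc; exact not_full_nil h.1

/-- an arch ends with a letter that does not appear earlier in it -/
lemma IsArch.last_not_mem_dropLast {b : List α} (h : IsArch b) :
    b = b.dropLast ++ [b.getLast h.ne_nil] ∧ b.getLast h.ne_nil ∉ b.dropLast := by
  refine ⟨(List.dropLast_append_getLast h.ne_nil).symm, ?_⟩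
  intro hc
  have hlen : b.dropLast.length = b.length - 1 := List.length_dropLast
  have hlenpos : 1 ≤ b.length := List.length_pos_iff.mpr h.ne_nil
  have hmin := h.2 (b.length - 1) (by omega)
  apply hmin
  rw [← List.dropLast_eq_take]  -- maybe name differs
  intro x hx
  have hx' := h.1 hx
  have : x ∈ b.toFinset := hx'
  rw [List.mem_toFinset] at this
  conv at this => rw [← List.dropLast_append_getLast h.ne_nil]
  rw [List.mem_append] at this
  rw [List.mem_toFinset]
  rcases this with h1 | h1
  · exact h1
  · simp only [List.mem_singleton] at h1
    subst h1
    exact hc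

end Arch2

section Arch3

variable {α : Type*} [Fintype α] [DecidableEq α] [Nonempty α]

lemma archLen_append {u : List α} (v : List α) (h : Finset.univ ⊆ u.toFinset) :
    archLen (u ++ v) = archLen u := by
  have hfull : Finset.univ ⊆ (u ++ v).toFinset := by
    intro x hx
    simp only [List.toFinset_append, Finset.mem_union]
    exact Or.inl (h hx)
  have hle : archLen u ≤ u.length := archLen_le_length u h
  apply Nat.le_antisymm
  · apply Nat.sInf_le
    show Finset.univ ⊆ ((u ++ v).take (archLen u)).toFinset
    rw [List.take_append_of_le_length hle]
    exact archLen_mem u h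
  · by_contra hc
    push_neg at hc
    have hmem := archLen_mem (u ++ v) hfull
    have hlt : archLen (u ++ v) < archLen u := hc
    have hlt' : archLen (u ++ v) ≤ u.length := le_trans (le_of_lt hlt) hle
    rw [List.take_append_of_le_length hlt'] at hmem
    exact archLen_min u hlt hmem

lemma full_append_left {u : List α} (v : List α) (h : Finset.univ ⊆ u.toFinset) :
    Finset.univ ⊆ (u ++ v).toFinset := by
  intro x hx
  simp only [List.toFinset_append, Finset.mem_union]
  exact Or.inl (h hx)

/-- Concatenation lemma for the number of arches. -/
lemma nArch_append (u v : List α) :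
    nArch (u ++ v) = nArch u + nArch (rst u ++ v) ∧ rst (u ++ v) = rst (rst u ++ v) := by
  have key : ∀ n (u : List α), u.length ≤ n →
      nArch (u ++ v) = nArch u + nArch (rst u ++ v) ∧ rst (u ++ v) = rst (rst u ++ v) := by
    intro n
    induction n with
    | zero =>
      intro u hu
      have : u = [] := List.length_eq_zero_iff.mp (Nat.le_zero.mp hu)
      subst this
      rw [rst_of_not_full not_full_nil, nArch_of_not_full not_full_nil]
      simp
    | succ n ih =>
      intro u hu
      by_cases h : Finset.univ ⊆ u.toFinset
      · have hfull := full_append_left v h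
        have hal := archLen_append v h
        have hle : archLen u ≤ u.length := archLen_le_length u h
        have hpos := archLen_pos u h
        have hdrop : (u ++ v).drop (archLen (u ++ v)) = u.drop (archLen u) ++ v := by
          rw [hal, List.drop_append_of_le_length hle]
        have hlen : (u.drop (archLen u)).length ≤ n := by
          rw [List.length_drop]; omega
        obtain ⟨ihm, ihr⟩ := ih (u.drop (archLen u)) hlen
        constructor
        · rw [nArch_rec hfull, hdrop, ihm, nArch_rec h, rst_rec h]
          omega
        · rw [rst_rec hfull, hdrop, ihr, rst_rec h]
      · rw [rst_of_not_full h, nArch_of_not_full h]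
        simp
  exact key u.length u le_rfl

lemma nArch_append' (u v : List α) : nArch (u ++ v) = nArch u + nArch (rst u ++ v) :=
  (nArch_append u v).1

lemma rst_append' (u v : List α) : rst (u ++ v) = rst (rst u ++ v) :=
  (nArch_append u v).2

/-- Alphabet-invariance: the arch behaviour of `s ++ z` depends on `s` only through
its alphabet, provided `s` is not full. -/
lemma alph_invariance {s t : List α} (z : List α) (hs : ¬ Finset.univ ⊆ s.toFinset)
    (hst : s.toFinset = t.toFinset) :
    nArch (s ++ z) = nArch (t ++ z) ∧ (rst (s ++ z)).toFinset = (rst (t ++ z)).toFinset := by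
  have ht : ¬ Finset.univ ⊆ t.toFinset := by rw [← hst]; exact hs
  by_cases hfull : Finset.univ ⊆ (s ++ z).toFinset
  · have hfull' : Finset.univ ⊆ (t ++ z).toFinset := by
      intro x hx
      have := hfull hx
      simp only [List.toFinset_append, Finset.mem_union] at this ⊢
      rw [← hst]; exact this
    -- first arch position determined by alphabet of s
    have key : ∀ (s : List α), ¬ Finset.univ ⊆ s.toFinset →
        Finset.univ ⊆ (s ++ z).toFinset →
        archLen (s ++ z) = s.length + sInf {k | Finset.univ ⊆ s.toFinset ∪ (z.take k).toFinset} ∧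
        {k | Finset.univ ⊆ s.toFinset ∪ (z.take k).toFinset} =
          {k | Finset.univ ⊆ s.toFinset ∪ (z.take k).toFinset} := by
      intro s hs hfull
      refine ⟨?_, rfl⟩
      have hne : ∃ k, Finset.univ ⊆ s.toFinset ∪ (z.take k).toFinset := by
        refine ⟨z.length, ?_⟩
        intro x hx
        have := hfull hx
        simpa using this
      set k0 := sInf {k | Finset.univ ⊆ s.toFinset ∪ (z.take k).toFinset} with hk0
      have hk0mem : Finset.univ ⊆ s.toFinset ∪ (z.take k0).toFinset := Nat.sInf_mem hne
      have htake : ((s ++ z).take (s.length + k0)).toFinset = s.toFinset ∪ (z.take k0).toFinset := by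
        rw [List.take_length_add_append]
        simp
      apply Nat.le_antisymm
      · apply Nat.sInf_le
        show Finset.univ ⊆ ((s ++ z).take (s.length + k0)).toFinset
        rw [htake]; exact hk0mem
      · by_contra hc
        push_neg at hc
        have hmem := archLen_mem (s ++ z) hfull
        by_cases hsl : archLen (s ++ z) ≤ s.length
        · rw [List.take_append_of_le_length hsl] at hmem
          apply hs
          intro x hx
          have := hmem hx
          rw [List.mem_toFinset] at this ⊢
          exact List.mem_of_mem_take this
        · push_neg at hsl
          set k1 := archLen (s ++ z) - s.length with hk1
          have hk1' : archLen (s ++ z) = s.length + k1 := by omega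
          have : Finset.univ ⊆ s.toFinset ∪ (z.take k1).toFinset := by
            rw [hk1'] at hmem
            rw [List.take_length_add_append] at hmem
            simpa using hmem
          have : k0 ≤ k1 := Nat.sInf_le this
          omega
    obtain ⟨hs_len, -⟩ := key s hs hfull
    obtain ⟨ht_len, -⟩ := key t ht hfull'
    rw [hst] at hs_len
    set k0 := sInf {k | Finset.univ ⊆ t.toFinset ∪ (z.take k).toFinset} with hk0
    have hdrops : (s ++ z).drop (archLen (s ++ z)) = z.drop k0 := by
      rw [hs_len, List.drop_length_add_append]
    have hdropt : (t ++ z).drop (archLen (t ++ z)) = z.drop k0 := by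
      rw [ht_len, List.drop_length_add_append]
    constructor
    · rw [nArch_rec hfull, nArch_rec hfull', hdrops, hdropt]
    · rw [rst_rec hfull, rst_rec hfull', hdrops, hdropt]
  · have hfull' : ¬ Finset.univ ⊆ (t ++ z).toFinset := by
      intro hc
      apply hfull
      intro x hx
      have := hc hx
      simp only [List.toFinset_append, Finset.mem_union] at this ⊢
      rw [hst]; exact this
    rw [rst_of_not_full hfull, rst_of_not_full hfull',
      nArch_of_not_full hfull, nArch_of_not_full hfull']
    simp only [List.toFinset_append, hst, and_self]

end Arch3

section Arch4

variable {α : Type*} [Fintype α] [DecidableEq α] [Nonempty α]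

lemma full_append_right {v : List α} (u : List α) (h : Finset.univ ⊆ v.toFinset) :
    Finset.univ ⊆ (u ++ v).toFinset := by
  intro x hx
  simp only [List.toFinset_append, Finset.mem_union]
  exact Or.inr (h hx)

lemma archLen_of_isArch {b : List α} (h : IsArch b) : archLen b = b.length := by
  have h1 : archLen b ≤ b.length := archLen_le_length b h.1
  rcases Nat.lt_or_ge (archLen b) b.length with h2 | h2
  · exact absurd (archLen_mem b h.1) (h.2 _ h2)
  · omega

/-- A flattened list of arches factorizes exactly into those arches, with empty rest. -/
lemma nArch_flatten_arches : ∀ (D : List (List α)), (∀ b ∈ D, IsArch b) →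
    nArch D.flatten = D.length ∧ rst D.flatten = [] := by
  intro D
  induction D with
  | nil =>
    intro _
    rw [List.flatten_nil]
    exact ⟨nArch_of_not_full not_full_nil, rst_of_not_full not_full_nil⟩
  | cons b D ih =>
    intro hD
    have hb : IsArch b := hD b (by simp)
    have hD' : ∀ b ∈ D, IsArch b := fun x hx => hD x (by simp [hx])
    obtain ⟨ihm, ihr⟩ := ih hD'
    have hfull : Finset.univ ⊆ (b :: D).flatten.toFinset := by
      rw [List.flatten_cons]
      exact full_append_left _ hb.1
    have hal : archLen (b :: D).flatten = b.length := by
      rw [List.flatten_cons, archLen_append _ hb.1, archLen_of_isArch hb]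
    have hdrop : (b :: D).flatten.drop (archLen (b :: D).flatten) = D.flatten := by
      rw [hal, List.flatten_cons, List.drop_left]
    constructor
    · rw [nArch_rec hfull, hdrop, ihm]
      simp [Nat.add_comm]
    · rw [rst_rec hfull, hdrop, ihr]

/-- Behaviour of one arch appended to a non-full word: it contributes one or two arches,
and in the latter case the rest is empty. -/
lemma arch_step {s b : List α} (hs : ¬ Finset.univ ⊆ s.toFinset) (hb : IsArch b) :
    1 ≤ nArch (s ++ b) ∧ nArch (s ++ b) ≤ 2 ∧ (nArch (s ++ b) = 2 → rst (s ++ b) = []) := by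
  have hfull : Finset.univ ⊆ (s ++ b).toFinset := full_append_right s hb.1
  set N := archLen (s ++ b) with hN
  have hNle : N ≤ s.length + b.length := by
    have := archLen_le_length (s ++ b) hfull
    simpa using this
  have hNgt : s.length < N := by
    by_contra hc
    push_neg at hc
    have hmem := archLen_mem (s ++ b) hfull
    rw [List.take_append_of_le_length hc] at hmem
    apply hs
    intro x hx
    have := hmem hx
    rw [List.mem_toFinset] at this ⊢
    exact List.mem_of_mem_take this
  set k := N - s.length with hk
  have hk1 : 1 ≤ k := by omega
  have hkb : k ≤ b.length := by omega
  have hdrop : (s ++ b).drop N = b.drop k := by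
    have : N = s.length + k := by omega
    rw [this, List.drop_length_add_append]
  have hrec := nArch_rec hfull
  have hrrec := rst_rec hfull
  rw [← hN] at hrec hrrec
  rw [hdrop] at hrec hrrec
  by_cases hy : Finset.univ ⊆ (b.drop k).toFinset
  · -- the suffix is full: it is itself exactly one arch
    obtain ⟨hbeq, hcnot⟩ := hb.last_not_mem_dropLast
    set c := b.getLast hb.ne_nil with hc
    have hklt : k < b.length := by
      rcases Nat.lt_or_ge k b.length with h' | h'
      · exact h'
      · exfalso
        have hnil : b.drop k = [] := List.drop_eq_nil_of_le h'
        rw [hnil] at hy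
        exact not_full_nil hy
    have hymin : ∀ j < (b.drop k).length, ¬ Finset.univ ⊆ ((b.drop k).take j).toFinset := by
      intro j hj hcon
      have hkd : k ≤ b.dropLast.length := by
        rw [List.length_dropLast]
        have : 1 ≤ b.length := List.length_pos_iff.mpr hb.ne_nil
        omega
      have hsplit : b.drop k = b.dropLast.drop k ++ [c] := by
        conv_lhs => rw [hbeq]
        rw [List.drop_append_of_le_length hkd]
      rw [List.length_drop] at hj
      have hjlen : j ≤ (b.dropLast.drop k).length := by
        rw [List.length_drop, List.length_dropLast]
        omega
      have htake : (b.drop k).take j = (b.dropLast.drop k).take j := by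
        rw [hsplit, List.take_append_of_le_length hjlen]
      have hcmem : c ∈ (b.drop k).take j :=
        List.mem_toFinset.mp (hcon (Finset.mem_univ c))
      rw [htake] at hcmem
      apply hcnot
      exact List.mem_of_mem_drop (List.mem_of_mem_take hcmem)
    have harch : IsArch (b.drop k) := ⟨hy, hymin⟩
    have := nArch_flatten_arches [b.drop k] (by simpa using harch)
    simp only [List.flatten_cons, List.flatten_nil, List.append_nil,
      List.length_singleton] at this
    rw [hrec, hrrec, this.1, this.2]
    refine ⟨by omega, by omega, fun _ => rfl⟩
  · rw [hrec, hrrec, nArch_of_not_full hy]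
    refine ⟨by omega, by omega, fun hcon => by omega⟩

/-- Bounds for a non-full word followed by arches. -/
lemma nArch_arches_bounds : ∀ (D : List (List α)) (s : List α),
    (∀ b ∈ D, IsArch b) → ¬ Finset.univ ⊆ s.toFinset →
    D.length ≤ nArch (s ++ D.flatten) ∧ nArch (s ++ D.flatten) ≤ D.length + 1 ∧
      (nArch (s ++ D.flatten) = D.length + 1 → rst (s ++ D.flatten) = []) := by
  intro D
  induction D with
  | nil =>
    intro s _ hs
    simp only [List.flatten_nil, List.append_nil, List.length_nil]
    rw [nArch_of_not_full hs]
    exact ⟨le_rfl, by omega, fun h => by omega⟩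
  | cons b D ih =>
    intro s hD hs
    have hb : IsArch b := hD b (by simp)
    have hD' : ∀ x ∈ D, IsArch x := fun x hx => hD x (by simp [hx])
    have hassoc : s ++ (b :: D).flatten = (s ++ b) ++ D.flatten := by
      rw [List.flatten_cons, List.append_assoc]
    rw [hassoc]
    rw [nArch_append' (s ++ b) D.flatten, rst_append' (s ++ b) D.flatten]
    obtain ⟨h1, h2, h3⟩ := arch_step hs hb
    obtain ⟨ih1, ih2, ih3⟩ := ih (rst (s ++ b)) hD' (rst_not_full (s ++ b))
    rcases Nat.lt_or_ge (nArch (s ++ b)) 2 with hcase | hcase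
    · have he : nArch (s ++ b) = 1 := by omega
      rw [he]
      refine ⟨by simp; omega, by simp; omega, fun hcon => ?_⟩
      apply ih3
      simp at hcon
      omega
    · have he : nArch (s ++ b) = 2 := by omega
      have hrst : rst (s ++ b) = [] := h3 he
      rw [he, hrst]
      have := nArch_flatten_arches D hD'
      simp only [List.nil_append]
      rw [this.1, this.2]
      refine ⟨by simp, by simp; omega, fun _ => rfl⟩

/-- The key deletion lemma. -/
lemma deletion_lemma {s : List α} (D : List (List α)) (z : List α)
    (hD : ∀ b ∈ D, IsArch b) (hs : ¬ Finset.univ ⊆ s.toFinset)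
    (hrep : (rst (s ++ D.flatten)).toFinset = s.toFinset) :
    nArch (s ++ D.flatten ++ z) = D.length + nArch (s ++ z) ∧
      (rst (s ++ D.flatten ++ z)).toFinset = (rst (s ++ z)).toFinset := by
  set s' := rst (s ++ D.flatten) with hs'
  have hs'nf : ¬ Finset.univ ⊆ s'.toFinset := rst_not_full _
  have hinv := alph_invariance z hs'nf hrep
  have hcnt : nArch (s ++ D.flatten) = D.length := by
    obtain ⟨h1, h2, h3⟩ := nArch_arches_bounds D s hD hs
    rcases Nat.lt_or_ge (nArch (s ++ D.flatten)) (D.length + 1) with hc | hc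
    · omega
    · exfalso
      have heq : nArch (s ++ D.flatten) = D.length + 1 := by omega
      have hnil := h3 heq
      by_cases hse : s.toFinset = ∅
      · -- s = [] essentially; then s ++ flatten D is a pure arch list
        have hsnil : s = [] := (List.toFinset_eq_empty_iff _).mp hse
        subst hsnil
        have := nArch_flatten_arches D hD
        simp only [List.nil_append] at heq
        rw [this.1] at heq
        omega
      · have hrep' : (rst (s ++ D.flatten)).toFinset = s.toFinset := hrep
        rw [hnil] at hrep'
        simp at hrep'
        exact hse hrep'.symm
  constructor
  · rw [nArch_append' (s ++ D.flatten) z, hcnt, ← hs', hinv.1]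
  · rw [rst_append' (s ++ D.flatten) z, ← hs', hinv.2]

end Arch4

section Univ

variable {α : Type*} [Fintype α] [DecidableEq α] [Nonempty α]

lemma isKUniversal_nArch (w : List α) : IsKUniversal (nArch w) w := by
  have key : ∀ n (w : List α), w.length ≤ n → IsKUniversal (nArch w) w := by
    intro n
    induction n with
    | zero =>
      intro w hw
      have : w = [] := List.length_eq_zero_iff.mp (Nat.le_zero.mp hw)
      subst this
      rw [nArch_of_not_full not_full_nil]
      intro u hu
      have : u = [] := List.length_eq_zero_iff.mp (Nat.le_zero.mp hu)
      subst this
      exact List.Sublist.refl _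
    | succ n ih =>
      intro w hw
      by_cases h : Finset.univ ⊆ w.toFinset
      · rw [nArch_rec h]
        intro u hu
        have hpos := archLen_pos w h
        have hrecu : IsKUniversal (nArch (w.drop (archLen w))) (w.drop (archLen w)) := by
          apply ih
          rw [List.length_drop]
          omega
        cases u with
        | nil => exact List.nil_sublist w
        | cons x t =>
          have hx : x ∈ w.take (archLen w) := by
            have := archLen_mem w h (Finset.mem_univ x)
            exact List.mem_toFinset.mp this
          have ht : t.Sublist (w.drop (archLen w)) := by
            apply hrecu
            simp only [List.length_cons] at hu
            omega
          have hsub : (x :: t).Sublist (w.take (archLen w) ++ w.drop (archLen w)) :=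
            List.Sublist.append (List.singleton_sublist.mpr hx) ht
          rwa [List.take_append_drop] at hsub
      · rw [nArch_of_not_full h]
        intro u hu
        have : u = [] := List.length_eq_zero_iff.mp (Nat.le_zero.mp hu)
        subst this
        exact List.nil_sublist w
  exact key w.length w le_rfl

/-- skip lemma: matching the distinguished last letter of an arch -/
lemma skip_lemma {c : α} : ∀ (q : List α) (t y : List α), c ∉ q →
    (c :: t).Sublist (q ++ c :: y) → t.Sublist y := by
  intro q
  induction q with
  | nil =>
    intro t y _ h
    simpa using h
  | cons d q ih =>
    intro t y hc h
    rw [List.cons_append] at h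
    cases h with
    | cons _ h' => exact ih t y (fun m => hc (List.mem_cons_of_mem d m)) h'
    | cons_cons _ h' => exact absurd List.mem_cons_self hc

/-- there is a word of length `nArch w + 1` that is not a subsequence of `w` -/
lemma exists_not_sublist (w : List α) :
    ∃ u : List α, u.length = nArch w + 1 ∧ ¬ u.Sublist w := by
  have key : ∀ n (w : List α), w.length ≤ n →
      ∃ u : List α, u.length = nArch w + 1 ∧ ¬ u.Sublist w := by
    intro n
    induction n with
    | zero =>
      intro w hw
      have : w = [] := List.length_eq_zero_iff.mp (Nat.le_zero.mp hw)
      subst this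
      rw [nArch_of_not_full not_full_nil]
      obtain ⟨a⟩ := ‹Nonempty α›
      exact ⟨[a], rfl, by simp⟩
    | succ n ih =>
      intro w hw
      by_cases h : Finset.univ ⊆ w.toFinset
      · have hpos := archLen_pos w h
        set b := w.take (archLen w) with hb
        set w₂ := w.drop (archLen w) with hw₂
        have hbarch : IsArch b := by
          have := mem_arch_isArch w
          rw [archFact_rec w h] at this
          exact this b (by simp [hb])
        obtain ⟨u₂, hu₂len, hu₂⟩ := ih w₂ (by rw [hw₂, List.length_drop]; omega)
        obtain ⟨hbeq, hcnot⟩ := hbarch.last_not_mem_dropLast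
        set c := b.getLast hbarch.ne_nil with hc
        refine ⟨c :: u₂, ?_, ?_⟩
        · rw [List.length_cons, hu₂len, nArch_rec h, ← hw₂]; omega
        · intro hcon
          apply hu₂
          have hweq : w = b.dropLast ++ c :: w₂ := by
            conv_lhs => rw [← List.take_append_drop (archLen w) w]
            rw [← hb, ← hw₂]
            conv_lhs => rw [hbeq]
            simp
          rw [hweq] at hcon
          exact skip_lemma b.dropLast u₂ w₂ hcnot hcon
      · obtain ⟨x, hx⟩ : ∃ x : α, x ∉ w.toFinset := by
          by_contra hcon
          push_neg at hcon
          exact h (fun y _ => hcon y)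
        refine ⟨[x], by simp [nArch_of_not_full h], ?_⟩
        intro hcon
        have : x ∈ w := List.Sublist.mem (by simp) hcon
        exact hx (List.mem_toFinset.mpr this)
  exact key w.length w le_rfl

lemma univIndex_eq_nArch (w : List α) : univIndex w = nArch w := by
  have hset : {k | IsKUniversal k w} = Set.Iic (nArch w) := by
    ext k
    simp only [Set.mem_setOf_eq, Set.mem_Iic]
    constructor
    · intro hk
      by_contra hc
      push_neg at hc
      obtain ⟨u, hlen, hu⟩ := exists_not_sublist w
      exact hu (hk u (by omega))
    · intro hk u hu
      exact isKUniversal_nArch w u (le_trans hu hk)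
  rw [univIndex, hset, csSup_Iic]

end Univ

section GammaAfter

variable {α : Type*} [Fintype α] [DecidableEq α] [Nonempty α]

lemma gammaWord_append_of_full {p : List α} (q : List α) (h : Finset.univ ⊆ p.toFinset) :
    gammaWord (p ++ q) = gammaWord p := by
  unfold gammaWord
  rw [List.reverse_append]
  rw [List.Subset.dedup_append_right]
  intro x hx
  rw [List.mem_reverse] at hx ⊢
  exact List.mem_toFinset.mp (h (Finset.mem_univ x))

lemma afterFirst_append_of_mem {a : α} {p : List α} (q : List α) (h : a ∈ p) :
    afterFirst a (p ++ q) = afterFirst a p ++ q := by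
  unfold afterFirst
  rw [List.idxOf_append_of_mem h]
  have hlt : p.idxOf a < p.length := List.idxOf_lt_length_iff.mpr h
  rw [List.drop_append_of_le_length (by omega)]

end GammaAfter

section Main

variable {α : Type*} [Fintype α] [DecidableEq α] [Nonempty α]

lemma main_aux : ∀ (n : ℕ) (w : List α), w.length ≤ n → w.toFinset = Finset.univ →
    ∃ (w' : List α) (c : ℕ),
      univIndex w' ≤ (2 ^ Fintype.card α) ^ Fintype.card α ∧
      gammaWord w' = gammaWord w ∧
      (∀ a : α, iotaLetter a w = iotaLetter a w' + c) ∧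
      (∀ a : α, restLetter a w' = restLetter a w) := by
  intro n
  induction n with
  | zero =>
    intro w hw hfull
    have : w = [] := List.length_eq_zero_iff.mp (Nat.le_zero.mp hw)
    subst this
    exfalso
    exact not_full_nil (α := α) (by rw [hfull])
  | succ n ih =>
    intro w hw hfull
    set N := (2 ^ Fintype.card α) ^ Fintype.card α with hN
    by_cases hsmall : nArch w ≤ N
    · refine ⟨w, 0, ?_, rfl, fun a => by omega, fun a => rfl⟩
      rw [univIndex_eq_nArch]
      exact hsmall
    · push_neg at hsmall
      have hfull' : Finset.univ ⊆ w.toFinset := by rw [hfull]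
      have harch := mem_arch_isArch w
      have hflat := flatten_rst w
      obtain ⟨b₁, T, hA⟩ : ∃ b₁ T, (archFact w).1 = b₁ :: T := by
        cases hA : (archFact w).1 with
        | nil => exfalso; unfold nArch at hsmall; rw [hA] at hsmall; simp at hsmall
        | cons b T => exact ⟨b, T, rfl⟩
      have hb₁ : IsArch b₁ := harch b₁ (by rw [hA]; simp)
      have hwT : w = b₁ ++ (T.flatten ++ rst w) := by
        conv_lhs => rw [← hflat, hA]
        rw [List.flatten_cons, List.append_assoc]
      have hTlen : T.length + 1 = nArch w := by
        unfold nArch; rw [hA]; simp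
      set x : α → List α := fun a => afterFirst a b₁ with hx
      have hafter : ∀ a : α, afterFirst a w = x a ++ (T.flatten ++ rst w) := by
        intro a
        conv_lhs => rw [hwT]
        rw [afterFirst_append_of_mem _ (List.mem_toFinset.mp (hb₁.1 (Finset.mem_univ a)))]
      have hcard : Fintype.card (α → Finset α) < Fintype.card (Fin (T.length + 1)) := by
        rw [Fintype.card_fin, Fintype.card_fun, Fintype.card_finset, hTlen]
        exact hsmall
      obtain ⟨i0, j0, hij0, hgeq0⟩ := Fintype.exists_ne_map_eq_of_card_lt
        (fun t : Fin (T.length + 1) => fun a => (rst (x a ++ (T.take t).flatten)).toFinset) hcard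
      obtain ⟨i, j, hij, hjle, hgeq⟩ : ∃ i j : ℕ, i < j ∧ j ≤ T.length ∧ ∀ a,
          (rst (x a ++ (T.take i).flatten)).toFinset
            = (rst (x a ++ (T.take j).flatten)).toFinset := by
        have hne : i0.val ≠ j0.val := fun hc => hij0 (Fin.ext hc)
        rcases Nat.lt_or_ge i0.val j0.val with h' | h'
        · exact ⟨i0, j0, h', by omega, fun a => congrFun hgeq0 a⟩
        · refine ⟨j0, i0, by omega, by omega, fun a => (congrFun hgeq0 a).symm⟩
      set D := (T.drop i).take (j - i) with hD
      have hDarch : ∀ b ∈ D, IsArch b := by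
        intro b hb
        apply harch b
        rw [hA]
        exact List.mem_cons_of_mem _ (List.mem_of_mem_drop (List.mem_of_mem_take hb))
      have hDlen : D.length = j - i := by
        rw [hD, List.length_take, List.length_drop]
        omega
      have htakej : T.take j = T.take i ++ D := by
        rw [hD]
        have hj' : j = i + (j - i) := by omega
        conv_lhs => rw [hj']
        rw [List.take_add]
      set z := (T.drop j).flatten ++ rst w with hz
      have hTsplit : T.flatten ++ rst w = (T.take i).flatten ++ (D.flatten ++ z) := by
        conv_lhs => rw [← List.take_append_drop j T]
        rw [htakej, List.flatten_append, List.flatten_append, hz]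
        simp [List.append_assoc]
      set w' := b₁ ++ ((T.take i).flatten ++ z) with hw'
      have key : ∀ a : α, nArch (afterFirst a w) = nArch (afterFirst a w') + (j - i) ∧
          (rst (afterFirst a w')).toFinset = (rst (afterFirst a w)).toFinset := by
        intro a
        have hmem : a ∈ b₁ := List.mem_toFinset.mp (hb₁.1 (Finset.mem_univ a))
        have hWa : afterFirst a w = (x a ++ (T.take i).flatten) ++ (D.flatten ++ z) := by
          rw [hafter a, hTsplit, List.append_assoc]
        have hW'a : afterFirst a w' = (x a ++ (T.take i).flatten) ++ z := by
          rw [hw', afterFirst_append_of_mem _ hmem, List.append_assoc]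
        set u := x a ++ (T.take i).flatten with hu
        set s := rst u with hs
        have hsnf : ¬ Finset.univ ⊆ s.toFinset := rst_not_full u
        have hrep : (rst (s ++ D.flatten)).toFinset = s.toFinset := by
          rw [hs, ← rst_append' u D.flatten]
          have huD : u ++ D.flatten = x a ++ (T.take j).flatten := by
            rw [hu, htakej, List.flatten_append, List.append_assoc]
          rw [huD]
          exact (hgeq a).symm
        obtain ⟨hd1, hd2⟩ := deletion_lemma D z hDarch hsnf hrep
        rw [List.append_assoc] at hd1 hd2
        constructor
        · rw [hWa, hW'a, nArch_append' u (D.flatten ++ z), nArch_append' u z, ← hs, hd1, hDlen]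
          omega
        · rw [hWa, hW'a, rst_append' u (D.flatten ++ z), rst_append' u z, ← hs, hd2]
      have hw'full : w'.toFinset = Finset.univ := by
        apply Finset.Subset.antisymm (Finset.subset_univ _)
        rw [hw']
        exact full_append_left _ hb₁.1
      have hDne : D ≠ [] := by
        intro hc
        rw [hc] at hDlen
        simp at hDlen
        omega
      have hDfl : 1 ≤ D.flatten.length := by
        obtain ⟨b, D', hDeq⟩ := List.exists_cons_of_ne_nil hDne
        have hbne : b ≠ [] := (hDarch b (by rw [hDeq]; simp)).ne_nil
        rw [hDeq, List.flatten_cons, List.length_append]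
        have : 1 ≤ b.length := List.length_pos_iff.mpr hbne
        omega
      have hw'len : w'.length ≤ n := by
        have hweq2 : w = b₁ ++ ((T.take i).flatten ++ (D.flatten ++ z)) := by
          rw [hwT, hTsplit]
        have h1 : w.length = b₁.length + ((T.take i).flatten.length + (D.flatten.length + z.length)) := by
          rw [hweq2]; simp [List.length_append]
        have h2 : w'.length = b₁.length + ((T.take i).flatten.length + z.length) := by
          rw [hw']; simp [List.length_append]
        omega
      obtain ⟨w'', c'', hu'', hg'', hi'', hr''⟩ := ih w' hw'len hw'full
      refine ⟨w'', c'' + (j - i), hu'', ?_, ?_, ?_⟩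
      · rw [hg'', hw', gammaWord_append_of_full _ hb₁.1]
        conv_rhs => rw [hwT]
        rw [gammaWord_append_of_full _ hb₁.1]
      · intro a
        have h1 : iotaLetter a w = iotaLetter a w' + (j - i) := by
          unfold iotaLetter
          rw [univIndex_eq_nArch, univIndex_eq_nArch, (key a).1]
        rw [h1, hi'' a]
        omega
      · intro a
        rw [hr'' a]
        unfold restLetter
        exact (key a).2

end Main

/-- 'if' direction of the pumping lemma: pumping down to universality
index at most `(2^σ)^σ`. -/
theorem stmt1 {α : Type*} [Fintype α] [DecidableEq α] [Nonempty α]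
    (w : List α) (hw : w.toFinset = Finset.univ) :
    ∃ (w' : List α) (c : ℕ),
      univIndex w' ≤ (2 ^ Fintype.card α) ^ Fintype.card α ∧
      gammaWord w' = gammaWord w ∧
      (∀ a : α, iotaLetter a w = iotaLetter a w' + c) ∧
      (∀ a : α, restLetter a w' = restLetter a w) :=
  main_aux w.length w le_rfl hw
end

section
/- Let α be a pattern over Σ and X that contains a variable x occurring exactly once in α, and let h₀ be the substitution mapping every variable to the empty word. Then for every k ∈ ℕ, there exists a substitution h with ι(h(α)) = k if and only if ι(h₀(α)) ≤ k. -/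
open List

section Helpers
set_option linter.unusedSectionVars false

variable {α : Type*} [Fintype α] [DecidableEq α] [Nonempty α]

lemma isKU_zero (w : List α) : IsKUniversal 0 w := by
  intro u hu
  rw [List.length_eq_zero_iff.mp (Nat.le_zero.mp hu)]
  exact List.nil_sublist w

lemma isKU_mono {k j : ℕ} {w : List α} (h : IsKUniversal k w) (hj : j ≤ k) :
    IsKUniversal j w := fun u hu => h u (hu.trans hj)

lemma isKU_le_length {k : ℕ} {w : List α} (h : IsKUniversal k w) : k ≤ w.length := by
  obtain ⟨a⟩ := ‹Nonempty α›
  simpa using (h (List.replicate k a) (by simp)).length_le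

lemma bddAbove_KU (w : List α) : BddAbove {k | IsKUniversal k w} :=
  ⟨w.length, fun _ hk => isKU_le_length hk⟩

lemma le_univIndex_iff {k : ℕ} {w : List α} : k ≤ univIndex w ↔ IsKUniversal k w := by
  constructor
  · intro h
    have hmem : univIndex w ∈ {k | IsKUniversal k w} :=
      Nat.sSup_mem ⟨0, isKU_zero w⟩ (bddAbove_KU w)
    exact isKU_mono hmem h
  · intro h
    exact le_csSup (bddAbove_KU w) h

lemma univIndex_isKU (w : List α) : IsKUniversal (univIndex w) w :=
  le_univIndex_iff.mp le_rfl

lemma univIndex_mono {u w : List α} (h : u.Sublist w) : univIndex u ≤ univIndex w :=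
  le_univIndex_iff.mpr (fun v hv => (univIndex_isKU u v hv).trans h)

lemma sublist_flatten_of_complete {L : List (List α)} (hL : ∀ f ∈ L, ∀ b : α, b ∈ f)
    {u : List α} (hu : u.length ≤ L.length) : u.Sublist L.flatten := by
  induction L generalizing u with
  | nil =>
    simp only [List.length_nil, Nat.le_zero] at hu
    rw [List.length_eq_zero_iff.mp hu]
    exact List.nil_sublist _
  | cons f L ih =>
    cases u with
    | nil => exact List.nil_sublist _
    | cons b u =>
      simp only [List.length_cons, Nat.succ_le_succ_iff] at hu
      have h1 : [b].Sublist f := List.singleton_sublist.mpr (hL f (by simp) b)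
      have h2 := ih (fun g hg => hL g (by simp [hg])) hu
      simpa using List.Sublist.append h1 h2

lemma step_exists {k : ℕ} {w : List α} (h : IsKUniversal (k + 1) w) :
    ∃ n ≤ w.length, (∀ b : α, b ∈ w.take n) ∧ IsKUniversal k (w.drop n) := by
  have hall : ∀ b : α, b ∈ w := fun b => List.singleton_sublist.mp (h [b] (by simp))
  have hlen : w.length ∈ {n | ∀ b : α, b ∈ w.take n} := by simpa using hall
  have hnmem : sInf {n | ∀ b : α, b ∈ w.take n} ∈ {n | ∀ b : α, b ∈ w.take n} :=
    Nat.sInf_mem ⟨_, hlen⟩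
  have hnle : sInf {n | ∀ b : α, b ∈ w.take n} ≤ w.length := Nat.sInf_le hlen
  obtain ⟨m, hm⟩ : ∃ m, sInf {n | ∀ b : α, b ∈ w.take n} = m + 1 := by
    refine ⟨sInf {n | ∀ b : α, b ∈ w.take n} - 1, ?_⟩
    have h0 : sInf {n | ∀ b : α, b ∈ w.take n} ≠ 0 := by
      intro h0
      obtain ⟨a⟩ := ‹Nonempty α›
      have := hnmem a
      rw [h0] at this
      simp at this
    omega
  have hmnot : m ∉ {n | ∀ b : α, b ∈ w.take n} := Nat.notMem_of_lt_sInf (by omega)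
  obtain ⟨b₀, hb₀⟩ : ∃ b : α, b ∉ w.take m := by
    by_contra hc; push_neg at hc; exact hmnot hc
  have hmlt : m < w.length := by omega
  have htake : w.take (m + 1) = w.take m ++ [w[m]] := by
    rw [List.take_succ, List.getElem?_eq_getElem hmlt]; rfl
  have hb0eq : b₀ = w[m] := by
    have hmemb : b₀ ∈ w.take (m + 1) := by
      have := hnmem b₀; rwa [hm] at this
    rw [htake] at hmemb
    rcases List.mem_append.mp hmemb with h' | h'
    · exact absurd h' hb₀
    · simpa using h'
  have hdrop : w.drop m = w[m] :: w.drop (m + 1) := List.drop_eq_getElem_cons hmlt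
  refine ⟨m + 1, by omega, by have := hnmem; rwa [hm] at this, ?_⟩
  intro u hu
  have hsub : (b₀ :: u).Sublist w := h (b₀ :: u) (by simpa using Nat.succ_le_succ hu)
  have hsub2 : (b₀ :: u).Sublist (w.take m ++ w.drop m) := by
    rwa [List.take_append_drop]
  rw [List.sublist_append_iff] at hsub2
  obtain ⟨q₁, q₂, hpq, hp, hq⟩ := hsub2
  cases q₁ with
  | nil =>
    simp only [List.nil_append] at hpq
    rw [← hpq, hdrop, ← hb0eq] at hq
    exact List.cons_sublist_cons.mp hq
  | cons c q₁' =>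
    have hcb : c = b₀ := by
      have := congrArg (fun l => l.head?) hpq
      simpa using this.symm
    exact absurd (hp.subset (by simp [hcb])) hb₀

lemma exists_factorization {k : ℕ} {w : List α} (h : IsKUniversal k w) :
    ∃ (L : List (List α)) (r : List α), w = L.flatten ++ r ∧ L.length = k ∧
      ∀ f ∈ L, ∀ b : α, b ∈ f := by
  induction k generalizing w with
  | zero => exact ⟨[], w, by simp, rfl, by simp⟩
  | succ k ih =>
    obtain ⟨n, _, hcomp, hk⟩ := step_exists h
    obtain ⟨L, r, heq, hlen, hc⟩ := ih hk
    refine ⟨w.take n :: L, r, ?_, by simp [hlen], ?_⟩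
    · conv_lhs => rw [← List.take_append_drop n w]
      rw [heq, List.flatten_cons, List.append_assoc]
    · intro f hf
      rcases List.mem_cons.mp hf with rfl | hf
      · exact hcomp
      · exact hc f hf

lemma del_aux : ∀ (L : List (List α)) (s r t : List α) (a : α), L ≠ [] →
    L.flatten ++ r = s ++ a :: t → (∀ f ∈ L, ∀ b : α, b ∈ f) →
    ∃ L' : List (List α), L'.length + 1 = L.length ∧ (∀ f ∈ L', ∀ b : α, b ∈ f) ∧
      L'.flatten.Sublist (s ++ t) := by
  intro L
  induction L with
  | nil => intro s r t a h; exact absurd rfl h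
  | cons f L ih =>
    intro s r t a _ heq hcomp
    rw [List.flatten_cons, List.append_assoc] at heq
    rcases List.append_eq_append_iff.mp heq with ⟨s', hs, hR⟩ | ⟨f', hf, hR⟩
    · rcases eq_or_ne L [] with rfl | hL
      · exact ⟨[], by simp, by simp, by simp⟩
      · obtain ⟨L', h1, h2, h3⟩ := ih s' r t a hL hR (fun g hg => hcomp g (by simp [hg]))
        refine ⟨f :: L', by simpa using h1, ?_, ?_⟩
        · intro g hg
          rcases List.mem_cons.mp hg with rfl | hg
          · exact hcomp g (by simp)
          · exact h2 g hg
        · rw [hs, List.flatten_cons, List.append_assoc]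
          exact (List.Sublist.refl f).append h3
    · cases f' with
      | nil =>
        simp only [List.append_nil] at hf
        simp only [List.nil_append] at hR
        rcases eq_or_ne L [] with rfl | hL
        · exact ⟨[], by simp, by simp, by simp⟩
        · obtain ⟨L', h1, h2, h3⟩ := ih [] r t a hL hR.symm (fun g hg => hcomp g (by simp [hg]))
          refine ⟨f :: L', by simpa using h1, ?_, ?_⟩
          · intro g hg
            rcases List.mem_cons.mp hg with rfl | hg
            · exact hcomp g (by simp)
            · exact h2 g hg
          · rw [hf, List.flatten_cons]
            exact (List.Sublist.refl s).append (by simpa using h3)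
      | cons c f'' =>
        have hca : c = a := by
          have := congrArg (fun l => l.head?) hR
          simpa using this.symm
        have ht : t = f'' ++ (L.flatten ++ r) := by
          have := congrArg List.tail hR
          simpa using this
        refine ⟨L, by simp, fun g hg => hcomp g (by simp [hg]), ?_⟩
        have hsubt : L.flatten.Sublist t := by
          rw [ht]
          exact (List.sublist_append_left _ _).trans (List.sublist_append_right f'' _)
        exact hsubt.trans (List.sublist_append_right s t)

lemma isKU_delete {k : ℕ} {s t : List α} {a : α}
    (h : IsKUniversal (k + 1) (s ++ a :: t)) : IsKUniversal k (s ++ t) := by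
  obtain ⟨L, r, heq, hlen, hcomp⟩ := exists_factorization h
  have hL : L ≠ [] := by rintro rfl; simp at hlen
  obtain ⟨L', h1, h2, h3⟩ := del_aux L s r t a hL heq.symm hcomp
  intro u hu
  exact (sublist_flatten_of_complete h2 (by omega)).trans h3

lemma univIndex_insert_le (s t : List α) (a : α) :
    univIndex (s ++ a :: t) ≤ univIndex (s ++ t) + 1 := by
  rcases Nat.eq_zero_or_pos (univIndex (s ++ a :: t)) with h | h
  · omega
  · obtain ⟨m, hm⟩ : ∃ m, univIndex (s ++ a :: t) = m + 1 := ⟨univIndex (s ++ a :: t) - 1, by omega⟩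
    have hku := univIndex_isKU (s ++ a :: t)
    rw [hm] at hku
    have := le_univIndex_iff.mpr (isKU_delete hku)
    omega

lemma applySub_empty_sublist {X : Type*} (h : X → List α) (p : List (α ⊕ X)) :
    (applySub (fun _ => ([] : List α)) p).Sublist (applySub h p) := by
  induction p with
  | nil => simp [applySub]
  | cons e p ih =>
    simp only [applySub, List.flatMap_cons] at *
    refine List.Sublist.append ?_ ih
    cases e with
    | inl a => simp
    | inr y => simp

lemma applySub_eq_of_notmem {X : Type*} [DecidableEq X] {x : X} (m : List α)
    {q : List (α ⊕ X)} (hq : (Sum.inr x : α ⊕ X) ∉ q) :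
    applySub (fun y => if y = x then m else []) q = applySub (fun _ => ([] : List α)) q := by
  induction q with
  | nil => rfl
  | cons e q ih =>
    simp only [applySub, List.flatMap_cons] at *
    rw [ih (fun h => hq (List.mem_cons_of_mem _ h))]
    congr 1
    cases e with
    | inl a => rfl
    | inr y =>
      have hyx : y ≠ x := by
        rintro rfl
        exact hq List.mem_cons_self
      simp [hyx]

lemma ivt {g : ℕ → ℕ} {N k : ℕ} (h0 : g 0 ≤ k) (hN : k ≤ g N)
    (hstep : ∀ j, j < N → g (j + 1) ≤ g j + 1) : ∃ j, j ≤ N ∧ g j = k := by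
  have key : ∀ j, j ≤ N → (∃ i, i ≤ j ∧ g i = k) ∨ g j < k := by
    intro j
    induction j with
    | zero =>
      intro _
      rcases eq_or_lt_of_le h0 with h | h
      · exact Or.inl ⟨0, le_rfl, h⟩
      · exact Or.inr h
    | succ j ih =>
      intro hj
      rcases ih (by omega) with ⟨i, hi, hgi⟩ | hlt
      · exact Or.inl ⟨i, by omega, hgi⟩
      · have hst := hstep j (by omega)
        rcases eq_or_lt_of_le (show g (j + 1) ≤ k by omega) with h | h
        · exact Or.inl ⟨j + 1, le_rfl, h⟩
        · exact Or.inr h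
  rcases key N le_rfl with ⟨i, hi, h⟩ | h
  · exact ⟨i, hi, h⟩
  · omega

lemma isKU_wpow (k : ℕ) :
    IsKUniversal k (wpow ((Finset.univ : Finset α).toList) k) := by
  intro u hu
  apply sublist_flatten_of_complete (L := List.replicate k (Finset.univ : Finset α).toList)
  · intro f hf b
    rw [List.eq_of_mem_replicate hf]
    simp
  · simpa using hu

lemma sum_beq_eq_decide {β γ : Type*} [DecidableEq β] [DecidableEq γ] (a b : β ⊕ γ) :
    (a == b) = decide (a = b) := by
  cases a <;> cases b
  · exact decide_eq_decide.mpr (by simp)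
  · rfl
  · rfl
  · exact decide_eq_decide.mpr (by simp)

lemma sumLawfulBEq {β γ : Type*} [DecidableEq β] [DecidableEq γ] : LawfulBEq (β ⊕ γ) where
  eq_of_beq h := by rwa [sum_beq_eq_decide, decide_eq_true_iff] at h
  rfl := by intros; rw [sum_beq_eq_decide]; simp

end Helpers

/-- if some variable occurs exactly once in the pattern `p`, then a
universality index of exactly `k` is reachable iff `k` is at least the universality
index of the image of `p` under the empty substitution. -/
theorem stmt3 {α X : Type*} [Fintype α] [DecidableEq α] [Nonempty α] [DecidableEq X]
    (p : List (α ⊕ X)) (x : X) (hx : p.count (Sum.inr x) = 1) (k : ℕ) :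
    (∃ h : X → List α, univIndex (applySub h p) = k) ↔
      univIndex (applySub (fun _ : X => ([] : List α)) p) ≤ k := by
  classical
  haveI : LawfulBEq (α ⊕ X) := sumLawfulBEq
  have hmem : (Sum.inr x : α ⊕ X) ∈ p := by
    rw [← List.count_pos_iff]
    omega
  obtain ⟨p₁, p₂, rfl⟩ := List.append_of_mem hmem
  have hcnt : List.count (Sum.inr x : α ⊕ X) p₁ = 0 ∧
      List.count (Sum.inr x : α ⊕ X) p₂ = 0 := by
    rw [List.count_append, List.count_cons_self] at hx
    omega
  have hx12 : (Sum.inr x : α ⊕ X) ∉ p₁ ∧ (Sum.inr x : α ⊕ X) ∉ p₂ :=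
    ⟨List.count_eq_zero.mp hcnt.1, List.count_eq_zero.mp hcnt.2⟩
  set A := applySub (fun _ : X => ([] : List α)) p₁ with hA
  set B := applySub (fun _ : X => ([] : List α)) p₂ with hB
  have hAB : applySub (fun _ : X => ([] : List α)) (p₁ ++ Sum.inr x :: p₂) = A ++ B := by
    simp [applySub, hA, hB]
  constructor
  · rintro ⟨h, rfl⟩
    exact univIndex_mono (applySub_empty_sublist h _)
  · intro hk
    rw [hAB] at hk
    set m := wpow ((Finset.univ : Finset α).toList) k with hm
    set g : ℕ → ℕ := fun j => univIndex (A ++ m.take j ++ B) with hg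
    have h0 : g 0 ≤ k := by simpa [hg] using hk
    have hN : k ≤ g m.length := by
      apply le_univIndex_iff.mpr
      intro u hu
      refine (isKU_wpow k u hu).trans ?_
      rw [List.take_length]
      exact ((List.sublist_append_right A m).trans (List.sublist_append_left (A ++ m) B))
    have hstep : ∀ j, j < m.length → g (j + 1) ≤ g j + 1 := by
      intro j hj
      have htk : m.take (j + 1) = m.take j ++ [m[j]] := by
        rw [List.take_succ, List.getElem?_eq_getElem hj]; rfl
      have e1 : A ++ m.take (j + 1) ++ B = (A ++ m.take j) ++ m[j] :: B := by
        rw [htk]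
        simp only [List.append_assoc, List.singleton_append]
      have e2 : A ++ m.take j ++ B = (A ++ m.take j) ++ B := by
        rw [List.append_assoc]
      simp only [hg]
      rw [e1]
      calc univIndex ((A ++ m.take j) ++ m[j] :: B)
          ≤ univIndex ((A ++ m.take j) ++ B) + 1 := univIndex_insert_le _ _ _
        _ = univIndex (A ++ m.take j ++ B) + 1 := by rw [List.append_assoc]
    obtain ⟨j, _, hgj⟩ := ivt h0 hN hstep
    refine ⟨fun y => if y = x then m.take j else [], ?_⟩
    have e₁ := applySub_eq_of_notmem (x := x) (m.take j) hx12.1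
    have e₂ := applySub_eq_of_notmem (x := x) (m.take j) hx12.2
    have heq : applySub (fun y => if y = x then m.take j else []) (p₁ ++ Sum.inr x :: p₂)
        = A ++ m.take j ++ B := by
      simp only [applySub, List.flatMap_append, List.flatMap_cons, Sum.elim_inr,
        if_pos rfl] at e₁ e₂ ⊢
      rw [e₁, e₂]
      simp only [hA, hB, applySub, List.append_assoc, if_true]
    rw [heq]
    exact hgj
end

section
/- Let α and β be patterns over Σ and X, each containing at least one occurrence of a variable. Then for every k ∈ ℕ there exists a substitution h such that h(α) ∼_k h(β). -/
open List

private lemma sublist_wpow {α : Type*} {L : List α} (hL : ∀ a : α, a ∈ L) :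
    ∀ (k : ℕ) (u : List α), u.length ≤ k → u.Sublist (wpow L k) := by
  intro k
  induction k with
  | zero => intro u hu; simp at hu; simp [hu, wpow]
  | succ k ih =>
    intro u hu
    match u with
    | [] => exact List.nil_sublist _
    | a :: t =>
      have h1 : [a].Sublist L := List.singleton_sublist.mpr (hL a)
      have h2 : t.Sublist (wpow L k) := ih t (by simpa using Nat.lt_succ_iff.mp hu)
      have : (a :: t).Sublist (L ++ wpow L k) := by
        simpa using List.Sublist.append h1 h2
      simpa [wpow, List.replicate_succ] using this

private lemma sublist_flatMap {α β : Type*} {g : β → List α} {e : β} :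
    ∀ {p : List β}, e ∈ p → (g e).Sublist (p.flatMap g) := by
  intro p hp
  induction p with
  | nil => simp at hp
  | cons b p ih =>
    rcases List.mem_cons.mp hp with rfl | hp
    · simpa [List.flatMap_cons] using (List.sublist_append_left (g e) (p.flatMap g))
    · rw [List.flatMap_cons]
      exact (ih hp).trans (List.sublist_append_right _ _)

/-- if both patterns contain at least one occurrence of a variable,
then for every `k` there is a substitution making the two images Simon `k`-congruent. -/
theorem stmt5 {α X : Type*} [Fintype α] [DecidableEq α] [Nonempty α]
    (p q : List (α ⊕ X)) (hp : ∃ x : X, Sum.inr x ∈ p) (hq : ∃ y : X, Sum.inr y ∈ q)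
    (k : ℕ) :
    ∃ h : X → List α, SimonCongr k (applySub h p) (applySub h q) := by
  classical
  set U : List α := wpow (Finset.univ.toList (α := α)) k with hU
  have hmem : ∀ a : α, a ∈ Finset.univ.toList (α := α) := by simp
  refine ⟨fun _ => U, ?_⟩
  have key : ∀ (r : List (α ⊕ X)), (∃ x : X, Sum.inr x ∈ r) →
      subseqK k (applySub (fun _ => U) r) = {u : List α | u.length ≤ k} := by
    rintro r ⟨x, hx⟩
    ext u
    constructor
    · rintro ⟨hlen, -⟩; exact hlen
    · intro hlen
      refine ⟨hlen, ?_⟩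
      have h1 : u.Sublist U := sublist_wpow hmem k u hlen
      have h2 : U.Sublist (applySub (fun _ => U) r) := by
        have := sublist_flatMap (g := Sum.elim (fun a => [a]) (fun _ : X => U)) hx
        simpa [applySub] using this
      exact h1.trans h2
  unfold SimonCongr
  rw [key p hp, key q hq]
end

section
/- Let γ be a permutation word of Σ. Then for every word w over Σ and every k ∈ ℕ, w is k-universal if and only if w ∼_k γ^k, where γ^k denotes the k-fold concatenation of γ. -/
open List

lemma wpow_univ {α : Type*} [DecidableEq α]
    (γ : List α) (hγ : IsPermWord γ) :
    ∀ (k : ℕ) (u : List α), u.length ≤ k → u.Sublist (wpow γ k) := by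
  intro k
  induction k with
  | zero =>
    intro u hu
    rw [Nat.le_zero, List.length_eq_zero_iff] at hu
    simp [hu]
  | succ k ih =>
    intro u hu
    cases u with
    | nil => simp
    | cons a t =>
      have hmem : a ∈ γ := by
        have := hγ a
        exact List.count_pos_iff.mp (by omega)
      have ht : t.Sublist (wpow γ k) := ih t (by simpa using Nat.lt_succ_iff.mp hu)
      have : wpow γ (k + 1) = γ ++ wpow γ k := by
        simp [wpow, List.replicate_succ]
      rw [this]
      exact List.Sublist.append (List.singleton_sublist.mpr hmem) ht

/-- `w` is `k`-universal iff `w ∼_k γ^k` for a permutation word `γ` of `Σ`. -/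
theorem stmt12 {α : Type*} [Fintype α] [DecidableEq α] [Nonempty α]
    (γ : List α) (hγ : IsPermWord γ) (w : List α) (k : ℕ) :
    IsKUniversal k w ↔ SimonCongr k w (wpow γ k) := by
  constructor
  · intro h
    ext u
    simp only [subseqK, Set.mem_setOf_eq]
    constructor
    · rintro ⟨hl, -⟩
      exact ⟨hl, wpow_univ γ hγ k u hl⟩
    · rintro ⟨hl, -⟩
      exact ⟨hl, h u hl⟩
  · intro h u hu
    have : u ∈ subseqK k (wpow γ k) := ⟨hu, wpow_univ γ hγ k u hu⟩
    rw [← h] at this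
    exact this.2
end
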